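/- Dynamic regret bound via gradient boundedness: let F_t : ℝ^n → ℝ be convex differentiable with ‖∇F_t(x)‖ ≤ G for all x and t, x*_t a minimizer of F_t, and x_t iterates with e_t = ‖x_t − x*_t‖. Then Σ_{t=1}^{T} (F_t(x_t) − F_t(x*_t)) ≤ G Σ_{t=1}^{T} e_t; combined with the cumulative tracking error bound, Σ_{t=1}^{T} (F_t(x_t) − F_t(x*_t)) ≤ (G/(1−r)) [ (e_1 − r·e_T) + α Σ_{t=1}^{T−1} ε_t + Σ_{t=1}^{T−1} ‖x*_{t+1} − x*_t‖ ]. -/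

import Mathlib

open InnerProductSpace

private lemma grad_ineq {E : Type*} [NormedAddCommGroup E] [InnerProductSpace ℝ E]
    [CompleteSpace E] {F : E → ℝ} {g p q : E}
    (hconv : ConvexOn ℝ Set.univ F) (hg : HasGradientAt F g p) :
    F p - F q ≤ ⟪g, p - q⟫_ℝ := by
  have hline : ∀ s : ℝ, (AffineMap.lineMap p q) s = p + s • (q - p) := by
    intro s; rw [AffineMap.lineMap_apply_module]; module
  have hconv1 : ConvexOn ℝ Set.univ (F ∘ (AffineMap.lineMap p q : ℝ →ᵃ[ℝ] E)) := by
    have := hconv.comp_affineMap (AffineMap.lineMap p q : ℝ →ᵃ[ℝ] E)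
    simpa using this
  have hc : HasDerivAt (fun s : ℝ => p + s • (q - p)) (q - p) 0 := by
    simpa using ((hasDerivAt_id (0:ℝ)).smul_const (q - p)).const_add p
  have hd : HasDerivAt (F ∘ (AffineMap.lineMap p q : ℝ →ᵃ[ℝ] E)) ⟪g, q - p⟫_ℝ 0 := by
    have hF : HasFDerivAt F (toDual ℝ E g)
        ((fun s : ℝ => p + s • (q - p)) 0) := by simpa using hg.hasFDerivAt
    have := hF.comp_hasDerivAt (0:ℝ) hc
    have heq : (fun s : ℝ => F (p + s • (q - p))) =
        F ∘ (AffineMap.lineMap p q : ℝ →ᵃ[ℝ] E) := by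
      funext s; simp [hline s]
    rw [← heq]; simp only [toDual_apply_apply] at this; exact this
  have hslope := hconv1.le_slope_of_hasDerivAt (x := (0:ℝ)) (y := (1:ℝ))
    (Set.mem_univ _) (Set.mem_univ _) one_pos hd
  have h01 : slope (F ∘ (AffineMap.lineMap p q : ℝ →ᵃ[ℝ] E)) 0 1 = F q - F p := by
    simp [slope, hline, Function.comp]
  rw [h01] at hslope
  have : ⟪g, p - q⟫_ℝ = -⟪g, q - p⟫_ℝ := by
    rw [← inner_neg_right]; congr 1; abel
  linarith [hslope, this.ge, this.le]

/-- Dynamic regret bound via gradient boundedness: for convex differentiable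
`F_t` with gradients bounded by `G`, the tracking dynamic regret is bounded by
`G` times the cumulative tracking error, and consequently by the closed-form
bound involving the optimizer drift and gradient errors. -/
theorem dynamic_regret_bound {n : ℕ}
    (F : ℕ → EuclideanSpace ℝ (Fin n) → ℝ)
    (gF : ℕ → EuclideanSpace ℝ (Fin n) → EuclideanSpace ℝ (Fin n))
    (G r α : ℝ) (hG : 0 ≤ G) (hr0 : 0 ≤ r) (hr1 : r < 1) (hα : 0 < α)
    (hconv : ∀ t, ConvexOn ℝ Set.univ (F t))
    (hgrad : ∀ t x, HasGradientAt (F t) (gF t x) x)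
    (hGbd : ∀ t x, ‖gF t x‖ ≤ G)
    (x xstar : ℕ → EuclideanSpace ℝ (Fin n))
    (ε : ℕ → ℝ) (hε : ∀ t, 0 ≤ ε t)
    (hmin : ∀ t, IsMinOn (F t) Set.univ (xstar t))
    (hstep : ∀ t, ‖x (t + 1) - xstar t‖ ≤ r * ‖x t - xstar t‖ + α * ε t)
    (T : ℕ) (hT : 1 ≤ T) :
    (∑ t ∈ Finset.Icc 1 T, (F t (x t) - F t (xstar t)) ≤
        G * ∑ t ∈ Finset.Icc 1 T, ‖x t - xstar t‖) ∧
    ∑ t ∈ Finset.Icc 1 T, (F t (x t) - F t (xstar t)) ≤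
      (G / (1 - r)) *
        ((‖x 1 - xstar 1‖ - r * ‖x T - xstar T‖)
          + α * ∑ t ∈ Finset.Icc 1 (T - 1), ε t
          + ∑ t ∈ Finset.Icc 1 (T - 1), ‖xstar (t + 1) - xstar t‖) := by
  set e : ℕ → ℝ := fun t => ‖x t - xstar t‖ with he
  -- per-term bound
  have hterm : ∀ t, F t (x t) - F t (xstar t) ≤ G * e t := by
    intro t
    have h1 := grad_ineq (q := xstar t) (hconv t) (hgrad t (x t))
    have h2 : ⟪gF t (x t), x t - xstar t⟫_ℝ ≤ ‖gF t (x t)‖ * ‖x t - xstar t‖ :=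
      real_inner_le_norm _ _
    have h3 : ‖gF t (x t)‖ * ‖x t - xstar t‖ ≤ G * e t :=
      mul_le_mul_of_nonneg_right (hGbd t (x t)) (norm_nonneg _)
    linarith
  have part1 : ∑ t ∈ Finset.Icc 1 T, (F t (x t) - F t (xstar t)) ≤
      G * ∑ t ∈ Finset.Icc 1 T, e t := by
    rw [Finset.mul_sum]
    exact Finset.sum_le_sum fun t _ => hterm t
  refine ⟨part1, ?_⟩
  -- recursion on tracking error
  have hrec : ∀ t, e (t + 1) ≤ r * e t + α * ε t + ‖xstar (t + 1) - xstar t‖ := by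
    intro t
    have h1 : e (t + 1) ≤ ‖x (t + 1) - xstar t‖ + ‖xstar (t + 1) - xstar t‖ := by
      have : x (t + 1) - xstar (t + 1) =
          (x (t + 1) - xstar t) - (xstar (t + 1) - xstar t) := by abel
      show ‖x (t + 1) - xstar (t + 1)‖ ≤ _
      rw [this]; exact norm_sub_le _ _
    linarith [hstep t]
  -- key summed inequality
  have key : ∀ T, 1 ≤ T → (1 - r) * ∑ t ∈ Finset.Icc 1 T, e t ≤
      (e 1 - r * e T) + α * ∑ t ∈ Finset.Icc 1 (T - 1), ε t
        + ∑ t ∈ Finset.Icc 1 (T - 1), ‖xstar (t + 1) - xstar t‖ := by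
    intro T hT
    induction T, hT using Nat.le_induction with
    | base => simp; nlinarith [norm_nonneg (x 1 - xstar 1)]
    | succ T hT ih =>
      have hsum : ∀ f : ℕ → ℝ, ∑ t ∈ Finset.Icc 1 (T + 1), f t =
          ∑ t ∈ Finset.Icc 1 T, f t + f (T + 1) :=
        fun f => Finset.sum_Icc_succ_top (by omega) f
      have hsum' : ∀ f : ℕ → ℝ, ∑ t ∈ Finset.Icc 1 T, f t =
          ∑ t ∈ Finset.Icc 1 (T - 1), f t + f T := by
        intro f
        have := Finset.sum_Icc_succ_top (a := 1) (b := T - 1) (by omega) f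
        rw [show T - 1 + 1 = T by omega] at this
        exact this
      have h1 := hrec T
      rw [show T + 1 - 1 = T by omega, hsum e, hsum' ε, hsum' (fun t => ‖xstar (t + 1) - xstar t‖)]
      nlinarith [ih, h1]
  have hkey := key T hT
  have h1r : (0:ℝ) < 1 - r := by linarith
  have hS : ∑ t ∈ Finset.Icc 1 T, e t ≤
      ((e 1 - r * e T) + α * ∑ t ∈ Finset.Icc 1 (T - 1), ε t
        + ∑ t ∈ Finset.Icc 1 (T - 1), ‖xstar (t + 1) - xstar t‖) / (1 - r) := by
    rw [le_div_iff₀ h1r]; linarith [hkey]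
  calc ∑ t ∈ Finset.Icc 1 T, (F t (x t) - F t (xstar t))
      ≤ G * ∑ t ∈ Finset.Icc 1 T, e t := part1
    _ ≤ G * (((e 1 - r * e T) + α * ∑ t ∈ Finset.Icc 1 (T - 1), ε t
        + ∑ t ∈ Finset.Icc 1 (T - 1), ‖xstar (t + 1) - xstar t‖) / (1 - r)) :=
        mul_le_mul_of_nonneg_left hS hG
    _ = _ := by ring
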